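/- For every (x, y) ∈ [0,1]², (C₂ ▵_φ C₁)(x, y) = sup{C(x, y) : C is a copula with C(t, φ(t)) = Γ(t) for all t ∈ [0,1]}; that is, the φ-splice of C₁ and C₂ is the pointwise supremum of the set of all copulas with curvilinear section Γ. -/

import Mathlib

open Set MeasureTheory

/-- `Γ̂(t) = t - Γ(t)`. -/
def Ghat (Γ : ℝ → ℝ) : ℝ → ℝ := fun t => t - Γ t

/-- `Γ̃(t) = φ(t) - Γ(t)`. -/
def Gtil (φ Γ : ℝ → ℝ) : ℝ → ℝ := fun t => φ t - Γ t

/-- The (signed) total variation `V_a^b(f)` of `f` on `[a, b] ⊆ [0, 1]`, with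
the conventions `V_b^a(f) = -V_a^b(f)` and `V_a^a(f) = 0`. -/
noncomputable def sV (f : ℝ → ℝ) (a b : ℝ) : ℝ := variationOnFromTo f (Set.Icc 0 1) a b

/-- `f₁(x, y) = x - (1/2) (V_{φ⁻¹(y)}^x(Γ̂) + Γ̂(x) + Γ̂(φ⁻¹(y)))`, where `ψ = φ⁻¹`. -/
noncomputable def f1 (ψ Γ : ℝ → ℝ) (x y : ℝ) : ℝ :=
  x - (1/2) * (sV (Ghat Γ) (ψ y) x + Ghat Γ x + Ghat Γ (ψ y))

/-- `f₂(x, y) = y - (1/2) (V_x^{φ⁻¹(y)}(Γ̃) + Γ̃(x) + Γ̃(φ⁻¹(y)))`, where `ψ = φ⁻¹`. -/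
noncomputable def f2 (φ ψ Γ : ℝ → ℝ) (x y : ℝ) : ℝ :=
  y - (1/2) * (sV (Gtil φ Γ) x (ψ y) + Gtil φ Γ x + Gtil φ Γ (ψ y))

/-- `C₁(x, y) = min {x, y, f₁(x, y)}`. -/
noncomputable def C1 (ψ Γ : ℝ → ℝ) (x y : ℝ) : ℝ := min x (min y (f1 ψ Γ x y))

/-- `C₂(x, y) = min {x, y, f₂(x, y)}`. -/
noncomputable def C2 (φ ψ Γ : ℝ → ℝ) (x y : ℝ) : ℝ := min x (min y (f2 φ ψ Γ x y))

/-- The φ-splice `C₂ ▵_φ C₁`: equal to `C₁` when `y ≤ φ(x)`, to `C₂` when `y ≥ φ(x)`. -/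
noncomputable def splice (φ ψ Γ : ℝ → ℝ) (x y : ℝ) : ℝ :=
  if y ≤ φ x then C1 ψ Γ x y else C2 φ ψ Γ x y

/-- A copula on `[0,1]²`: boundary conditions and 2-increasingness. -/
def IsCopula (C : ℝ → ℝ → ℝ) : Prop :=
  (∀ x ∈ Set.Icc (0:ℝ) 1, ∀ y ∈ Set.Icc (0:ℝ) 1, C x y ∈ Set.Icc (0:ℝ) 1) ∧
  (∀ x ∈ Set.Icc (0:ℝ) 1, C x 0 = 0 ∧ C 0 x = 0 ∧ C x 1 = x ∧ C 1 x = x) ∧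
  (∀ x₁ x₂ y₁ y₂ : ℝ, x₁ ∈ Set.Icc (0:ℝ) 1 → x₂ ∈ Set.Icc (0:ℝ) 1 →
    y₁ ∈ Set.Icc (0:ℝ) 1 → y₂ ∈ Set.Icc (0:ℝ) 1 → x₁ ≤ x₂ → y₁ ≤ y₂ →
    0 ≤ C x₂ y₂ - C x₂ y₁ - C x₁ y₂ + C x₁ y₁)

/-- The greatest quasi-copula `A_Γ` with curvilinear section `Γ` (`ψ = φ⁻¹`). -/
noncomputable def AG (φ ψ Γ : ℝ → ℝ) (x y : ℝ) : ℝ :=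
  if y ≤ φ x then min y (x - sSup (Ghat Γ '' Set.Icc (ψ y) x))
  else min x (y - sSup (Gtil φ Γ '' Set.Icc x (ψ y)))

/-! ### Auxiliary machinery for the proof -/

section VarAux

open Set

/-- Generic partition-sum bound on the variation. -/
lemma evar_step_le (f E : ℝ → ℝ) {a b : ℝ}
    (hstep : ∀ t t', a ≤ t → t ≤ t' → t' ≤ b → f t - f t' ≤ E t' - E t)
    (hmonoE : ∀ t t', a ≤ t → t ≤ t' → t' ≤ b → 0 ≤ E t' - E t) :
    eVariationOn f (Icc (0:ℝ) 1 ∩ Icc a b) ≤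
      ENNReal.ofReal (2*(E b - E a) + (f b - f a)) := by
  have bracket : ∀ p q, a ≤ p → p ≤ q → q ≤ b → 0 ≤ (f q - f p) + 2*(E q - E p) := by
    intro p q hp hpq hq
    have h1 := hstep p q hp hpq hq
    have h2 := hmonoE p q hp hpq hq
    rcases le_total (f p) (f q) with h | h <;> linarith
  refine iSup_le ?_
  rintro ⟨n, ⟨u, hu, us⟩⟩
  simp only
  have hmem : ∀ i, a ≤ u i ∧ u i ≤ b := fun i => ⟨(us i).2.1, (us i).2.2⟩
  have hed : ∀ i, edist (f (u (i+1))) (f (u i)) = ENNReal.ofReal |f (u (i+1)) - f (u i)| := by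
    intro i; rw [edist_dist, Real.dist_eq]
  calc ∑ i ∈ Finset.range n, edist (f (u (i+1))) (f (u i))
      = ∑ i ∈ Finset.range n, ENNReal.ofReal |f (u (i+1)) - f (u i)| :=
        Finset.sum_congr rfl fun i _ => hed i
    _ = ENNReal.ofReal (∑ i ∈ Finset.range n, |f (u (i+1)) - f (u i)|) := by
        rw [ENNReal.ofReal_sum_of_nonneg]; intro i _; exact abs_nonneg _
    _ ≤ ENNReal.ofReal (2*(E b - E a) + (f b - f a)) := by
        apply ENNReal.ofReal_le_ofReal
        have key : ∀ i, |f (u (i+1)) - f (u i)| ≤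
            (f (u (i+1)) - f (u i)) + 2*(E (u (i+1)) - E (u i)) := by
          intro i
          have h1 := hstep (u i) (u (i+1)) (hmem i).1 (hu (Nat.le_succ i)) (hmem (i+1)).2
          have h2 := hmonoE (u i) (u (i+1)) (hmem i).1 (hu (Nat.le_succ i)) (hmem (i+1)).2
          rcases abs_cases (f (u (i+1)) - f (u i)) with ⟨h, _⟩ | ⟨h, _⟩ <;> linarith
        calc ∑ i ∈ Finset.range n, |f (u (i+1)) - f (u i)|
            ≤ ∑ i ∈ Finset.range n, ((f (u (i+1)) - f (u i)) + 2*(E (u (i+1)) - E (u i))) :=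
              Finset.sum_le_sum fun i _ => key i
          _ = (f (u n) - f (u 0)) + 2*(E (u n) - E (u 0)) := by
              rw [Finset.sum_add_distrib, Finset.sum_range_sub (fun i => f (u i)),
                ← Finset.mul_sum, Finset.sum_range_sub (fun i => E (u i))]
          _ ≤ 2*(E b - E a) + (f b - f a) := by
              have h0n : u 0 ≤ u n := hu (Nat.zero_le n)
              have b1 := bracket a (u 0) le_rfl (hmem 0).1 (hmem 0).2
              have b2 := bracket (u n) b (hmem n).1 (hmem n).2 le_rfl
              linarith

lemma sV_step_le (f E : ℝ → ℝ) {a b : ℝ} (hab : a ≤ b)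
    (hstep : ∀ t t', a ≤ t → t ≤ t' → t' ≤ b → f t - f t' ≤ E t' - E t)
    (hmonoE : ∀ t t', a ≤ t → t ≤ t' → t' ≤ b → 0 ≤ E t' - E t) :
    sV f a b ≤ 2*(E b - E a) + (f b - f a) := by
  have h := evar_step_le f E hstep hmonoE
  rw [sV, variationOnFromTo.eq_of_le f _ hab]
  apply ENNReal.toReal_le_of_le_ofReal _ h
  have h1 := hstep a b le_rfl hab le_rfl
  have h2 := hmonoE a b le_rfl hab le_rfl
  rcases le_total (f a) (f b) with h3 | h3 <;> linarith

/-- Bounded variation on subintervals, given a global step bound. -/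
lemma lbv_of_step (f E : ℝ → ℝ)
    (hstep : ∀ t t', (0:ℝ) ≤ t → t ≤ t' → t' ≤ 1 → f t - f t' ≤ E t' - E t)
    (hmonoE : ∀ t t', (0:ℝ) ≤ t → t ≤ t' → t' ≤ 1 → 0 ≤ E t' - E t) :
    LocallyBoundedVariationOn f (Icc (0:ℝ) 1) := by
  intro a b ha hb
  rcases le_total a b with hab | hab
  · have h := evar_step_le f E
      (fun t t' h1 h2 h3 => hstep t t' (ha.1.trans h1) h2 (h3.trans hb.2))
      (fun t t' h1 h2 h3 => hmonoE t t' (ha.1.trans h1) h2 (h3.trans hb.2))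
    exact ne_top_of_le_ne_top ENNReal.ofReal_ne_top h
  · unfold BoundedVariationOn
    rcases lt_or_eq_of_le hab with h | h
    · rw [Icc_eq_empty (not_le.mpr h), inter_empty, eVariationOn.subsingleton]
      · simp
      · exact subsingleton_empty
    · subst h
      rw [Icc_self]
      rw [eVariationOn.subsingleton]
      · simp
      · intro x hx y hy
        rw [hx.2, hy.2]

lemma sV_ge_abs (f : ℝ → ℝ) (hf : LocallyBoundedVariationOn f (Icc (0:ℝ) 1)) {a b : ℝ}
    (ha : a ∈ Icc (0:ℝ) 1) (hb : b ∈ Icc (0:ℝ) 1) (hab : a ≤ b) :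
    |f b - f a| ≤ sV f a b := by
  rw [sV, variationOnFromTo.eq_of_le f _ hab]
  have hamem : a ∈ Icc (0:ℝ) 1 ∩ Icc a b := ⟨ha, le_rfl, hab⟩
  have hbmem : b ∈ Icc (0:ℝ) 1 ∩ Icc a b := ⟨hb, hab, le_rfl⟩
  have h := eVariationOn.edist_le f hamem hbmem
  rw [edist_dist, Real.dist_eq, abs_sub_comm] at h
  have := ENNReal.toReal_mono (hf a b ha hb) h
  rwa [ENNReal.toReal_ofReal (abs_nonneg _)] at this

lemma sV_add (f : ℝ → ℝ) (hf : LocallyBoundedVariationOn f (Icc (0:ℝ) 1)) {a b c : ℝ}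
    (ha : a ∈ Icc (0:ℝ) 1) (hb : b ∈ Icc (0:ℝ) 1) (hc : c ∈ Icc (0:ℝ) 1) :
    sV f a b + sV f b c = sV f a c :=
  variationOnFromTo.add hf ha hb hc

lemma isCopula_min (A B : ℝ → ℝ) (hA0 : A 0 = 0) (hB0 : B 0 = 0) (hAB1 : 1 ≤ A 1 + B 1)
    (hAinc : ∀ a b : ℝ, a ∈ Icc (0:ℝ) 1 → b ∈ Icc (0:ℝ) 1 → a ≤ b →
      0 ≤ A b - A a ∧ A b - A a ≤ b - a)
    (hBinc : ∀ a b : ℝ, a ∈ Icc (0:ℝ) 1 → b ∈ Icc (0:ℝ) 1 → a ≤ b →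
      0 ≤ B b - B a ∧ B b - B a ≤ b - a) :
    IsCopula (fun x y => min x (min y (A x + B y))) := by
  have h01 : (0:ℝ) ∈ Icc (0:ℝ) 1 := ⟨le_rfl, zero_le_one⟩
  have h11 : (1:ℝ) ∈ Icc (0:ℝ) 1 := ⟨zero_le_one, le_rfl⟩
  have hAnn : ∀ x ∈ Icc (0:ℝ) 1, 0 ≤ A x ∧ A x ≤ x := by
    intro x hx
    have h := hAinc 0 x h01 hx hx.1
    constructor <;> linarith [h.1, h.2]
  have hBnn : ∀ x ∈ Icc (0:ℝ) 1, 0 ≤ B x ∧ B x ≤ x := by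
    intro x hx
    have h := hBinc 0 x h01 hx hx.1
    constructor <;> linarith [h.1, h.2]
  have hA1 : ∀ x ∈ Icc (0:ℝ) 1, x ≤ A x + B 1 := by
    intro x hx
    have h := hAinc x 1 hx h11 hx.2
    linarith [h.2]
  have hB1 : ∀ x ∈ Icc (0:ℝ) 1, x ≤ A 1 + B x := by
    intro x hx
    have h := hBinc x 1 hx h11 hx.2
    linarith [h.2]
  refine ⟨?_, ?_, ?_⟩
  · intro x hx y hy
    constructor
    · simp only [le_min_iff]
      exact ⟨hx.1, hy.1, by linarith [(hAnn x hx).1, (hBnn y hy).1]⟩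
    · exact le_trans (min_le_left _ _) hx.2
  · intro x hx
    refine ⟨?_, ?_, ?_, ?_⟩
    · have : min (0:ℝ) (A x + B 0) = 0 := min_eq_left (by linarith [(hAnn x hx).1])
      simp only [this, min_eq_right hx.1]
    · have h1 : (0:ℝ) ≤ min x (A 0 + B x) := le_min hx.1 (by linarith [(hBnn x hx).1])
      simp only [min_eq_left h1]
    · have h1 : x ≤ min (1:ℝ) (A x + B 1) := le_min hx.2 (hA1 x hx)
      simp only [min_eq_left h1]
    · have h1 : min x (A 1 + B x) = x := min_eq_left (hB1 x hx)
      simp only [h1, min_eq_right hx.2]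
  · intro x₁ x₂ y₁ y₂ hx₁ hx₂ hy₁ hy₂ hx hy
    simp only
    obtain ⟨hA12, hA12'⟩ := hAinc x₁ x₂ hx₁ hx₂ hx
    obtain ⟨hB12, hB12'⟩ := hBinc y₁ y₂ hy₁ hy₂ hy
    have u1 : min x₁ (min y₂ (A x₁ + B y₂)) ≤ x₁ := min_le_left _ _
    have u2 : min x₁ (min y₂ (A x₁ + B y₂)) ≤ y₂ := le_trans (min_le_right _ _) (min_le_left _ _)
    have u3 : min x₁ (min y₂ (A x₁ + B y₂)) ≤ A x₁ + B y₂ :=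
      le_trans (min_le_right _ _) (min_le_right _ _)
    have v1 : min x₂ (min y₁ (A x₂ + B y₁)) ≤ x₂ := min_le_left _ _
    have v2 : min x₂ (min y₁ (A x₂ + B y₁)) ≤ y₁ := le_trans (min_le_right _ _) (min_le_left _ _)
    have v3 : min x₂ (min y₁ (A x₂ + B y₁)) ≤ A x₂ + B y₁ :=
      le_trans (min_le_right _ _) (min_le_right _ _)
    rcases min_cases x₂ (min y₂ (A x₂ + B y₂)) with ⟨e2, _⟩ | ⟨e2, _⟩ <;>
      rcases min_cases y₂ (A x₂ + B y₂) with ⟨e2', _⟩ | ⟨e2', _⟩ <;>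
        rcases min_cases x₁ (min y₁ (A x₁ + B y₁)) with ⟨e1, _⟩ | ⟨e1, _⟩ <;>
          rcases min_cases y₁ (A x₁ + B y₁) with ⟨e1', _⟩ | ⟨e1', _⟩ <;>
            linarith

namespace IsCopula
variable {C : ℝ → ℝ → ℝ} (hC : IsCopula C)
include hC

lemma mono_right {x y₁ y₂ : ℝ} (hx : x ∈ Icc (0:ℝ) 1) (hy₁ : y₁ ∈ Icc (0:ℝ) 1)
    (hy₂ : y₂ ∈ Icc (0:ℝ) 1) (h : y₁ ≤ y₂) : C x y₁ ≤ C x y₂ := by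
  have h2 := hC.2.2 0 x y₁ y₂ ⟨le_rfl, zero_le_one⟩ hx hy₁ hy₂ hx.1 h
  have e1 := (hC.2.1 y₁ hy₁).2.1
  have e2 := (hC.2.1 y₂ hy₂).2.1
  linarith

lemma mono_left {x₁ x₂ y : ℝ} (hx₁ : x₁ ∈ Icc (0:ℝ) 1) (hx₂ : x₂ ∈ Icc (0:ℝ) 1)
    (hy : y ∈ Icc (0:ℝ) 1) (h : x₁ ≤ x₂) : C x₁ y ≤ C x₂ y := by
  have h2 := hC.2.2 x₁ x₂ 0 y hx₁ hx₂ ⟨le_rfl, zero_le_one⟩ hy h hy.1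
  have e1 := (hC.2.1 x₁ hx₁).1
  have e2 := (hC.2.1 x₂ hx₂).1
  linarith

lemma lip_left {x₁ x₂ y : ℝ} (hx₁ : x₁ ∈ Icc (0:ℝ) 1) (hx₂ : x₂ ∈ Icc (0:ℝ) 1)
    (hy : y ∈ Icc (0:ℝ) 1) (h : x₁ ≤ x₂) : C x₂ y - C x₁ y ≤ x₂ - x₁ := by
  have h2 := hC.2.2 x₁ x₂ y 1 hx₁ hx₂ hy ⟨zero_le_one, le_rfl⟩ h hy.2
  have e1 := (hC.2.1 x₁ hx₁).2.2.1
  have e2 := (hC.2.1 x₂ hx₂).2.2.1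
  linarith

lemma lip_right {x y₁ y₂ : ℝ} (hx : x ∈ Icc (0:ℝ) 1) (hy₁ : y₁ ∈ Icc (0:ℝ) 1)
    (hy₂ : y₂ ∈ Icc (0:ℝ) 1) (h : y₁ ≤ y₂) : C x y₂ - C x y₁ ≤ y₂ - y₁ := by
  have h2 := hC.2.2 x 1 y₁ y₂ hx ⟨zero_le_one, le_rfl⟩ hy₁ hy₂ hx.2 h
  have e1 := (hC.2.1 y₁ hy₁).2.2.2
  have e2 := (hC.2.1 y₂ hy₂).2.2.2
  linarith

lemma le_left {x y : ℝ} (hx : x ∈ Icc (0:ℝ) 1) (hy : y ∈ Icc (0:ℝ) 1) : C x y ≤ x := by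
  have := hC.mono_right hx hy ⟨zero_le_one, le_rfl⟩ hy.2
  have e := (hC.2.1 x hx).2.2.1
  linarith

lemma le_right {x y : ℝ} (hx : x ∈ Icc (0:ℝ) 1) (hy : y ∈ Icc (0:ℝ) 1) : C x y ≤ y := by
  have := hC.mono_left hx ⟨zero_le_one, le_rfl⟩ hy hx.2
  have e := (hC.2.1 y hy).2.2.2
  linarith

end IsCopula

/-- Congruence for `IsCopula` under agreement on the square. -/
lemma isCopula_congr {F G : ℝ → ℝ → ℝ}
    (heq : ∀ x ∈ Icc (0:ℝ) 1, ∀ y ∈ Icc (0:ℝ) 1, F x y = G x y) (hF : IsCopula F) :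
    IsCopula G := by
  have h01 : (0:ℝ) ∈ Icc (0:ℝ) 1 := ⟨le_rfl, zero_le_one⟩
  have h11 : (1:ℝ) ∈ Icc (0:ℝ) 1 := ⟨zero_le_one, le_rfl⟩
  refine ⟨?_, ?_, ?_⟩
  · intro x hx y hy; rw [← heq x hx y hy]; exact hF.1 x hx y hy
  · intro x hx
    obtain ⟨a, b, c, d⟩ := hF.2.1 x hx
    exact ⟨(heq x hx 0 h01) ▸ a, (heq 0 h01 x hx) ▸ b, (heq x hx 1 h11) ▸ c,
      (heq 1 h11 x hx) ▸ d⟩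
  · intro x₁ x₂ y₁ y₂ hx₁ hx₂ hy₁ hy₂ hx hy
    rw [← heq x₂ hx₂ y₂ hy₂, ← heq x₂ hx₂ y₁ hy₁, ← heq x₁ hx₁ y₂ hy₂, ← heq x₁ hx₁ y₁ hy₁]
    exact hF.2.2 x₁ x₂ y₁ y₂ hx₁ hx₂ hy₁ hy₂ hx hy

/-- The cumulative negative-variation functional. -/
noncomputable def MV (f : ℝ → ℝ) (t : ℝ) : ℝ := (1/2) * (sV f 0 t - f t)

end VarAux

theorem stmt_11
    (φ Γ : ℝ → ℝ)
    (hφcont : ContinuousOn φ (Set.Icc 0 1))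
    (hφmono : StrictMonoOn φ (Set.Icc 0 1))
    (hφ0 : φ 0 = 0) (hφ1 : φ 1 = 1)
    (hΓrange : ∀ t ∈ Set.Icc (0:ℝ) 1, max 0 (t + φ t - 1) ≤ Γ t ∧ Γ t ≤ min t (φ t))
    (hΓlip : ∀ t₁ t₂ : ℝ, t₁ ∈ Set.Icc (0:ℝ) 1 → t₂ ∈ Set.Icc (0:ℝ) 1 → t₁ ≤ t₂ →
      0 ≤ Γ t₂ - Γ t₁ ∧ Γ t₂ - Γ t₁ ≤ (t₂ - t₁) + (φ t₂ - φ t₁))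
    (ψ : ℝ → ℝ)
    (hψmem : ∀ y ∈ Set.Icc (0:ℝ) 1, ψ y ∈ Set.Icc (0:ℝ) 1)
    (hψφ : ∀ t ∈ Set.Icc (0:ℝ) 1, ψ (φ t) = t)
    (hφψ : ∀ y ∈ Set.Icc (0:ℝ) 1, φ (ψ y) = y) :
    ∀ x ∈ Set.Icc (0:ℝ) 1, ∀ y ∈ Set.Icc (0:ℝ) 1,
      splice φ ψ Γ x y =
        sSup {c : ℝ | ∃ C : ℝ → ℝ → ℝ, IsCopula C ∧
          (∀ t ∈ Set.Icc (0:ℝ) 1, C t (φ t) = Γ t) ∧ c = C x y} := by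
  have h01 : (0:ℝ) ∈ Icc (0:ℝ) 1 := ⟨le_rfl, zero_le_one⟩
  have h11 : (1:ℝ) ∈ Icc (0:ℝ) 1 := ⟨zero_le_one, le_rfl⟩
  have hφm : ∀ a ∈ Icc (0:ℝ) 1, ∀ b ∈ Icc (0:ℝ) 1, a ≤ b → φ a ≤ φ b :=
    fun a ha b hb hab => hφmono.monotoneOn ha hb hab
  have hφmem : ∀ t ∈ Icc (0:ℝ) 1, φ t ∈ Icc (0:ℝ) 1 := fun t ht =>
    ⟨hφ0 ▸ hφm 0 h01 t ht ht.1, hφ1 ▸ hφm t ht 1 h11 ht.2⟩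
  have hΓ0 : Γ 0 = 0 := by
    have h := hΓrange 0 h01
    rw [hφ0] at h
    have h1 : max (0:ℝ) (0 + 0 - 1) = 0 := by norm_num
    have h2 : min (0:ℝ) 0 = 0 := by norm_num
    rw [h1, h2] at h
    linarith [h.1, h.2]
  have hΓ1 : Γ 1 = 1 := by
    have h := hΓrange 1 h11
    rw [hφ1] at h
    have h1 : max (0:ℝ) (1 + 1 - 1) = 1 := by norm_num
    have h2 : min (1:ℝ) 1 = 1 := by norm_num
    rw [h1, h2] at h
    linarith [h.1, h.2]
  have hΓm : ∀ a ∈ Icc (0:ℝ) 1, ∀ b ∈ Icc (0:ℝ) 1, a ≤ b → Γ a ≤ Γ b :=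
    fun a ha b hb hab => by linarith [(hΓlip a b ha hb hab).1]
  have hψ0 : ψ 0 = 0 := by have := hψφ 0 h01; rwa [hφ0] at this
  have hψ1 : ψ 1 = 1 := by have := hψφ 1 h11; rwa [hφ1] at this
  have hψm : ∀ y₁ ∈ Icc (0:ℝ) 1, ∀ y₂ ∈ Icc (0:ℝ) 1, y₁ ≤ y₂ → ψ y₁ ≤ ψ y₂ := by
    intro y₁ hy₁ y₂ hy₂ h
    by_contra hcon
    push_neg at hcon
    have := hφmono (hψmem y₂ hy₂) (hψmem y₁ hy₁) hcon
    rw [hφψ y₁ hy₁, hφψ y₂ hy₂] at this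
    linarith
  have hψle : ∀ x ∈ Icc (0:ℝ) 1, ∀ y ∈ Icc (0:ℝ) 1, y ≤ φ x → ψ y ≤ x := by
    intro x hx y hy h
    by_contra hcon
    push_neg at hcon
    have := hφmono hx (hψmem y hy) hcon
    rw [hφψ y hy] at this
    linarith
  have hψge : ∀ x ∈ Icc (0:ℝ) 1, ∀ y ∈ Icc (0:ℝ) 1, φ x ≤ y → x ≤ ψ y := by
    intro x hx y hy h
    by_contra hcon
    push_neg at hcon
    have := hφmono (hψmem y hy) hx hcon
    rw [hφψ y hy] at this
    linarith
  -- bounded variation of Γ̂ and Γ̃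
  have hLBV1 : LocallyBoundedVariationOn (Ghat Γ) (Icc (0:ℝ) 1) := by
    apply lbv_of_step (Ghat Γ) φ
    · intro t t' h0 htt' h1
      have h := (hΓlip t t' ⟨h0, htt'.trans h1⟩ ⟨h0.trans htt', h1⟩ htt').2
      show (t - Γ t) - (t' - Γ t') ≤ φ t' - φ t
      linarith
    · intro t t' h0 htt' h1
      linarith [hφm t ⟨h0, htt'.trans h1⟩ t' ⟨h0.trans htt', h1⟩ htt']
  have hLBV2 : LocallyBoundedVariationOn (Gtil φ Γ) (Icc (0:ℝ) 1) := by
    apply lbv_of_step (Gtil φ Γ) (fun t => t)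
    · intro t t' h0 htt' h1
      have h := (hΓlip t t' ⟨h0, htt'.trans h1⟩ ⟨h0.trans htt', h1⟩ htt').2
      show (φ t - Γ t) - (φ t' - Γ t') ≤ t' - t
      linarith
    · intro t t' _ htt' _
      linarith
  -- difference formula for MV
  have hsub1 : ∀ a ∈ Icc (0:ℝ) 1, ∀ b ∈ Icc (0:ℝ) 1,
      MV (Ghat Γ) b - MV (Ghat Γ) a = (1/2)*(sV (Ghat Γ) a b - (Ghat Γ b - Ghat Γ a)) := by
    intro a ha b hb
    have h := sV_add (Ghat Γ) hLBV1 h01 ha hb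
    unfold MV
    linarith
  have hsub2 : ∀ a ∈ Icc (0:ℝ) 1, ∀ b ∈ Icc (0:ℝ) 1,
      MV (Gtil φ Γ) b - MV (Gtil φ Γ) a =
        (1/2)*(sV (Gtil φ Γ) a b - (Gtil φ Γ b - Gtil φ Γ a)) := by
    intro a ha b hb
    have h := sV_add (Gtil φ Γ) hLBV2 h01 ha hb
    unfold MV
    linarith
  -- variation inequalities
  have habs1 : ∀ a ∈ Icc (0:ℝ) 1, ∀ b ∈ Icc (0:ℝ) 1, a ≤ b →
      |Ghat Γ b - Ghat Γ a| ≤ sV (Ghat Γ) a b := fun a ha b hb hab =>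
    sV_ge_abs (Ghat Γ) hLBV1 ha hb hab
  have habs2 : ∀ a ∈ Icc (0:ℝ) 1, ∀ b ∈ Icc (0:ℝ) 1, a ≤ b →
      |Gtil φ Γ b - Gtil φ Γ a| ≤ sV (Gtil φ Γ) a b := fun a ha b hb hab =>
    sV_ge_abs (Gtil φ Γ) hLBV2 ha hb hab
  have hub_phi : ∀ a ∈ Icc (0:ℝ) 1, ∀ b ∈ Icc (0:ℝ) 1, a ≤ b →
      sV (Ghat Γ) a b ≤ 2*(φ b - φ a) + (Ghat Γ b - Ghat Γ a) := by
    intro a ha b hb hab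
    apply sV_step_le (Ghat Γ) φ hab
    · intro t t' h1 h2 h3
      have htI : t ∈ Icc (0:ℝ) 1 := ⟨ha.1.trans h1, (h2.trans h3).trans hb.2⟩
      have ht'I : t' ∈ Icc (0:ℝ) 1 := ⟨htI.1.trans h2, h3.trans hb.2⟩
      have h := (hΓlip t t' htI ht'I h2).2
      show (t - Γ t) - (t' - Γ t') ≤ φ t' - φ t
      linarith
    · intro t t' h1 h2 h3
      have htI : t ∈ Icc (0:ℝ) 1 := ⟨ha.1.trans h1, (h2.trans h3).trans hb.2⟩
      have ht'I : t' ∈ Icc (0:ℝ) 1 := ⟨htI.1.trans h2, h3.trans hb.2⟩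
      linarith [hφm t htI t' ht'I h2]
  have hub_Γ1 : ∀ a ∈ Icc (0:ℝ) 1, ∀ b ∈ Icc (0:ℝ) 1, a ≤ b →
      sV (Ghat Γ) a b ≤ 2*(Γ b - Γ a) + (Ghat Γ b - Ghat Γ a) := by
    intro a ha b hb hab
    apply sV_step_le (Ghat Γ) Γ hab
    · intro t t' h1 h2 h3
      show (t - Γ t) - (t' - Γ t') ≤ Γ t' - Γ t
      linarith
    · intro t t' h1 h2 h3
      have htI : t ∈ Icc (0:ℝ) 1 := ⟨ha.1.trans h1, (h2.trans h3).trans hb.2⟩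
      have ht'I : t' ∈ Icc (0:ℝ) 1 := ⟨htI.1.trans h2, h3.trans hb.2⟩
      linarith [hΓm t htI t' ht'I h2]
  have hub_id2 : ∀ a ∈ Icc (0:ℝ) 1, ∀ b ∈ Icc (0:ℝ) 1, a ≤ b →
      sV (Gtil φ Γ) a b ≤ 2*(b - a) + (Gtil φ Γ b - Gtil φ Γ a) := by
    intro a ha b hb hab
    have := sV_step_le (Gtil φ Γ) (fun t => t) hab ?_ ?_
    · simpa using this
    · intro t t' h1 h2 h3
      have htI : t ∈ Icc (0:ℝ) 1 := ⟨ha.1.trans h1, (h2.trans h3).trans hb.2⟩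
      have ht'I : t' ∈ Icc (0:ℝ) 1 := ⟨htI.1.trans h2, h3.trans hb.2⟩
      have h := (hΓlip t t' htI ht'I h2).2
      show (φ t - Γ t) - (φ t' - Γ t') ≤ t' - t
      linarith
    · intro t t' _ h2 _
      linarith
  have hub_Γ2 : ∀ a ∈ Icc (0:ℝ) 1, ∀ b ∈ Icc (0:ℝ) 1, a ≤ b →
      sV (Gtil φ Γ) a b ≤ 2*(Γ b - Γ a) + (Gtil φ Γ b - Gtil φ Γ a) := by
    intro a ha b hb hab
    apply sV_step_le (Gtil φ Γ) Γ hab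
    · intro t t' h1 h2 h3
      have htI : t ∈ Icc (0:ℝ) 1 := ⟨ha.1.trans h1, (h2.trans h3).trans hb.2⟩
      have ht'I : t' ∈ Icc (0:ℝ) 1 := ⟨htI.1.trans h2, h3.trans hb.2⟩
      show (φ t - Γ t) - (φ t' - Γ t') ≤ Γ t' - Γ t
      linarith [hφm t htI t' ht'I h2]
    · intro t t' h1 h2 h3
      have htI : t ∈ Icc (0:ℝ) 1 := ⟨ha.1.trans h1, (h2.trans h3).trans hb.2⟩
      have ht'I : t' ∈ Icc (0:ℝ) 1 := ⟨htI.1.trans h2, h3.trans hb.2⟩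
      linarith [hΓm t htI t' ht'I h2]
  -- increments of the building blocks
  have hincM1 : ∀ a ∈ Icc (0:ℝ) 1, ∀ b ∈ Icc (0:ℝ) 1, a ≤ b →
      0 ≤ MV (Ghat Γ) b - MV (Ghat Γ) a ∧ MV (Ghat Γ) b - MV (Ghat Γ) a ≤ φ b - φ a := by
    intro a ha b hb hab
    have he := hsub1 a ha b hb
    have h1 := habs1 a ha b hb hab
    have h2 := hub_phi a ha b hb hab
    constructor <;> linarith [le_abs_self (Ghat Γ b - Ghat Γ a), neg_abs_le (Ghat Γ b - Ghat Γ a)]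
  have hincA1 : ∀ a ∈ Icc (0:ℝ) 1, ∀ b ∈ Icc (0:ℝ) 1, a ≤ b →
      0 ≤ (Γ b - MV (Ghat Γ) b) - (Γ a - MV (Ghat Γ) a) ∧
        (Γ b - MV (Ghat Γ) b) - (Γ a - MV (Ghat Γ) a) ≤ b - a := by
    intro a ha b hb hab
    have he := hsub1 a ha b hb
    have h1 := habs1 a ha b hb hab
    have h2 := hub_Γ1 a ha b hb hab
    have hga : Ghat Γ a = a - Γ a := rfl
    have hgb : Ghat Γ b = b - Γ b := rfl
    constructor <;> linarith [le_abs_self (Ghat Γ b - Ghat Γ a), neg_abs_le (Ghat Γ b - Ghat Γ a)]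
  have hincM2 : ∀ a ∈ Icc (0:ℝ) 1, ∀ b ∈ Icc (0:ℝ) 1, a ≤ b →
      0 ≤ MV (Gtil φ Γ) b - MV (Gtil φ Γ) a ∧ MV (Gtil φ Γ) b - MV (Gtil φ Γ) a ≤ b - a := by
    intro a ha b hb hab
    have he := hsub2 a ha b hb
    have h1 := habs2 a ha b hb hab
    have h2 := hub_id2 a ha b hb hab
    constructor <;>
      linarith [le_abs_self (Gtil φ Γ b - Gtil φ Γ a), neg_abs_le (Gtil φ Γ b - Gtil φ Γ a)]
  have hincB2' : ∀ a ∈ Icc (0:ℝ) 1, ∀ b ∈ Icc (0:ℝ) 1, a ≤ b →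
      0 ≤ (Γ b - MV (Gtil φ Γ) b) - (Γ a - MV (Gtil φ Γ) a) ∧
        (Γ b - MV (Gtil φ Γ) b) - (Γ a - MV (Gtil φ Γ) a) ≤ φ b - φ a := by
    intro a ha b hb hab
    have he := hsub2 a ha b hb
    have h1 := habs2 a ha b hb hab
    have h2 := hub_Γ2 a ha b hb hab
    have hga : Gtil φ Γ a = φ a - Γ a := rfl
    have hgb : Gtil φ Γ b = φ b - Γ b := rfl
    constructor <;>
      linarith [le_abs_self (Gtil φ Γ b - Gtil φ Γ a), neg_abs_le (Gtil φ Γ b - Gtil φ Γ a)]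
  -- the additive decompositions
  set A1 : ℝ → ℝ := fun t => Γ t - MV (Ghat Γ) t with hA1def
  set B1 : ℝ → ℝ := fun y => MV (Ghat Γ) (ψ y) with hB1def
  set A2 : ℝ → ℝ := fun t => MV (Gtil φ Γ) t with hA2def
  set B2 : ℝ → ℝ := fun y => Γ (ψ y) - MV (Gtil φ Γ) (ψ y) with hB2def
  have hMV10 : MV (Ghat Γ) 0 = 0 := by
    unfold MV
    have h : sV (Ghat Γ) 0 0 = 0 := variationOnFromTo.self (Ghat Γ) (Icc (0:ℝ) 1) 0
    have hg : Ghat Γ 0 = 0 - Γ 0 := rfl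
    rw [h, hg, hΓ0]
    ring
  have hMV20 : MV (Gtil φ Γ) 0 = 0 := by
    unfold MV
    have h : sV (Gtil φ Γ) 0 0 = 0 := variationOnFromTo.self (Gtil φ Γ) (Icc (0:ℝ) 1) 0
    have hg : Gtil φ Γ 0 = φ 0 - Γ 0 := rfl
    rw [h, hg, hΓ0, hφ0]
    ring
  have hA10 : A1 0 = 0 := by rw [hA1def]; simp only; rw [hMV10, hΓ0]; ring
  have hB10 : B1 0 = 0 := by rw [hB1def]; simp only; rw [hψ0, hMV10]
  have hA1B1 : 1 ≤ A1 1 + B1 1 := by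
    rw [hA1def, hB1def]; simp only; rw [hψ1, hΓ1]; linarith
  have hA20 : A2 0 = 0 := by rw [hA2def]; simp only; rw [hMV20]
  have hB20 : B2 0 = 0 := by rw [hB2def]; simp only; rw [hψ0, hMV20, hΓ0]; ring
  have hA2B2 : 1 ≤ A2 1 + B2 1 := by
    rw [hA2def, hB2def]; simp only; rw [hψ1, hΓ1]; linarith
  have hincA1' : ∀ a ∈ Icc (0:ℝ) 1, ∀ b ∈ Icc (0:ℝ) 1, a ≤ b →
      0 ≤ A1 b - A1 a ∧ A1 b - A1 a ≤ b - a := by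
    intro a ha b hb hab
    rw [hA1def]
    exact hincA1 a ha b hb hab
  have hincB1' : ∀ a ∈ Icc (0:ℝ) 1, ∀ b ∈ Icc (0:ℝ) 1, a ≤ b →
      0 ≤ B1 b - B1 a ∧ B1 b - B1 a ≤ b - a := by
    intro a ha b hb hab
    rw [hB1def]
    simp only
    have hsa := hψmem a ha
    have hsb := hψmem b hb
    have hs := hψm a ha b hb hab
    have h := hincM1 (ψ a) hsa (ψ b) hsb hs
    have h2 : φ (ψ a) = a := hφψ a ha
    have h3 : φ (ψ b) = b := hφψ b hb
    rw [h2, h3] at h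
    exact h
  have hincA2' : ∀ a ∈ Icc (0:ℝ) 1, ∀ b ∈ Icc (0:ℝ) 1, a ≤ b →
      0 ≤ A2 b - A2 a ∧ A2 b - A2 a ≤ b - a := by
    intro a ha b hb hab
    rw [hA2def]
    exact hincM2 a ha b hb hab
  have hincB2'' : ∀ a ∈ Icc (0:ℝ) 1, ∀ b ∈ Icc (0:ℝ) 1, a ≤ b →
      0 ≤ B2 b - B2 a ∧ B2 b - B2 a ≤ b - a := by
    intro a ha b hb hab
    rw [hB2def]
    simp only
    have hsa := hψmem a ha
    have hsb := hψmem b hb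
    have hs := hψm a ha b hb hab
    have h := hincB2' (ψ a) hsa (ψ b) hsb hs
    have h2 : φ (ψ a) = a := hφψ a ha
    have h3 : φ (ψ b) = b := hφψ b hb
    rw [h2, h3] at h
    exact h
  -- the key identities for f1 and f2
  have hf1eq : ∀ x ∈ Icc (0:ℝ) 1, ∀ y ∈ Icc (0:ℝ) 1, f1 ψ Γ x y = A1 x + B1 y := by
    intro x hx y hy
    have hadd := sV_add (Ghat Γ) hLBV1 h01 (hψmem y hy) hx
    rw [hA1def, hB1def]
    simp only
    unfold f1 MV
    have hgx : Ghat Γ x = x - Γ x := rfl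
    linarith
  have hf2eq : ∀ x ∈ Icc (0:ℝ) 1, ∀ y ∈ Icc (0:ℝ) 1, f2 φ ψ Γ x y = A2 x + B2 y := by
    intro x hx y hy
    have hadd := sV_add (Gtil φ Γ) hLBV2 h01 hx (hψmem y hy)
    rw [hA2def, hB2def]
    simp only
    unfold f2 MV
    have hgs : Gtil φ Γ (ψ y) = φ (ψ y) - Γ (ψ y) := rfl
    have hpy : φ (ψ y) = y := hφψ y hy
    linarith
  -- C1 and C2 are copulas
  have hCop1 : IsCopula (C1 ψ Γ) := by
    apply isCopula_congr (F := fun x y => min x (min y (A1 x + B1 y)))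
    · intro x hx y hy
      rw [C1, hf1eq x hx y hy]
    · exact isCopula_min A1 B1 hA10 hB10 hA1B1
        (fun a b ha hb hab => hincA1' a ha b hb hab)
        (fun a b ha hb hab => hincB1' a ha b hb hab)
  have hCop2 : IsCopula (C2 φ ψ Γ) := by
    apply isCopula_congr (F := fun x y => min x (min y (A2 x + B2 y)))
    · intro x hx y hy
      rw [C2, hf2eq x hx y hy]
    · exact isCopula_min A2 B2 hA20 hB20 hA2B2
        (fun a b ha hb hab => hincA2' a ha b hb hab)
        (fun a b ha hb hab => hincB2'' a ha b hb hab)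
  -- sections of C1 and C2
  have hsec1 : ∀ t ∈ Icc (0:ℝ) 1, C1 ψ Γ t (φ t) = Γ t := by
    intro t ht
    have hf : f1 ψ Γ t (φ t) = Γ t := by
      rw [hf1eq t ht (φ t) (hφmem t ht), hA1def, hB1def]
      simp only
      rw [hψφ t ht]
      ring
    have hΓt := (hΓrange t ht).2
    rw [C1, hf]
    rw [min_eq_right (le_trans hΓt (min_le_right _ _)),
      min_eq_right (le_trans hΓt (min_le_left _ _))]
  have hsec2 : ∀ t ∈ Icc (0:ℝ) 1, C2 φ ψ Γ t (φ t) = Γ t := by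
    intro t ht
    have hf : f2 φ ψ Γ t (φ t) = Γ t := by
      rw [hf2eq t ht (φ t) (hφmem t ht), hA2def, hB2def]
      simp only
      rw [hψφ t ht]
      ring
    have hΓt := (hΓrange t ht).2
    rw [C2, hf]
    rw [min_eq_right (le_trans hΓt (min_le_right _ _)),
      min_eq_right (le_trans hΓt (min_le_left _ _))]
  -- upper bounds for arbitrary copulas with section Γ
  have hle1 : ∀ Cc : ℝ → ℝ → ℝ, IsCopula Cc → (∀ t ∈ Icc (0:ℝ) 1, Cc t (φ t) = Γ t) →
      ∀ x ∈ Icc (0:ℝ) 1, ∀ y ∈ Icc (0:ℝ) 1, y ≤ φ x → Cc x y ≤ C1 ψ Γ x y := by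
    intro Cc hc hsec x hx y hy hyx
    have hs : ψ y ∈ Icc (0:ℝ) 1 := hψmem y hy
    have hsx : ψ y ≤ x := hψle x hx y hy hyx
    rw [C1]
    refine le_min (hc.le_left hx hy) (le_min (hc.le_right hx hy) ?_)
    have hkey := sV_step_le (Ghat Γ) (fun t => Cc x (φ t)) hsx ?_ ?_
    · rw [hφψ y hy, hsec x hx] at hkey
      unfold f1
      have hgx : Ghat Γ x = x - Γ x := rfl
      linarith
    · intro t t' h1 h2 h3
      have htI : t ∈ Icc (0:ℝ) 1 := ⟨hs.1.trans h1, (h2.trans h3).trans hx.2⟩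
      have ht'I : t' ∈ Icc (0:ℝ) 1 := ⟨htI.1.trans h2, h3.trans hx.2⟩
      have hrect := hc.2.2 t' x (φ t) (φ t') ht'I hx (hφmem t htI) (hφmem t' ht'I) h3
        (hφm t htI t' ht'I h2)
      have hlip := hc.lip_left htI ht'I (hφmem t htI) h2
      have e1 := hsec t htI
      have e2 := hsec t' ht'I
      show (t - Γ t) - (t' - Γ t') ≤ Cc x (φ t') - Cc x (φ t)
      linarith
    · intro t t' h1 h2 h3
      have htI : t ∈ Icc (0:ℝ) 1 := ⟨hs.1.trans h1, (h2.trans h3).trans hx.2⟩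
      have ht'I : t' ∈ Icc (0:ℝ) 1 := ⟨htI.1.trans h2, h3.trans hx.2⟩
      linarith [hc.mono_right hx (hφmem t htI) (hφmem t' ht'I) (hφm t htI t' ht'I h2)]
  have hle2 : ∀ Cc : ℝ → ℝ → ℝ, IsCopula Cc → (∀ t ∈ Icc (0:ℝ) 1, Cc t (φ t) = Γ t) →
      ∀ x ∈ Icc (0:ℝ) 1, ∀ y ∈ Icc (0:ℝ) 1, φ x ≤ y → Cc x y ≤ C2 φ ψ Γ x y := by
    intro Cc hc hsec x hx y hy hxy
    have hs : ψ y ∈ Icc (0:ℝ) 1 := hψmem y hy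
    have hxs : x ≤ ψ y := hψge x hx y hy hxy
    rw [C2]
    refine le_min (hc.le_left hx hy) (le_min (hc.le_right hx hy) ?_)
    have hcs : Cc (ψ y) y = Γ (ψ y) := by
      have := hsec (ψ y) hs
      rwa [hφψ y hy] at this
    have hkey := sV_step_le (Gtil φ Γ) (fun t => Cc t y) hxs ?_ ?_
    · rw [hcs] at hkey
      unfold f2
      have hgs : Gtil φ Γ (ψ y) = φ (ψ y) - Γ (ψ y) := rfl
      have hpy : φ (ψ y) = y := hφψ y hy
      linarith
    · intro t t' h1 h2 h3
      have htI : t ∈ Icc (0:ℝ) 1 := ⟨hx.1.trans h1, (h2.trans h3).trans hs.2⟩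
      have ht'I : t' ∈ Icc (0:ℝ) 1 := ⟨htI.1.trans h2, h3.trans hs.2⟩
      have hφt'y : φ t' ≤ y := by
        have := hφm t' ht'I (ψ y) hs h3
        rwa [hφψ y hy] at this
      have hrect := hc.2.2 t t' (φ t') y htI ht'I (hφmem t' ht'I) hy h2 hφt'y
      have hlip := hc.lip_right htI (hφmem t htI) (hφmem t' ht'I) (hφm t htI t' ht'I h2)
      have e1 := hsec t htI
      have e2 := hsec t' ht'I
      show (φ t - Γ t) - (φ t' - Γ t') ≤ Cc t' y - Cc t y
      linarith
    · intro t t' h1 h2 h3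
      have htI : t ∈ Icc (0:ℝ) 1 := ⟨hx.1.trans h1, (h2.trans h3).trans hs.2⟩
      have ht'I : t' ∈ Icc (0:ℝ) 1 := ⟨htI.1.trans h2, h3.trans hs.2⟩
      linarith [hc.mono_left htI ht'I hy h2]
  -- final assembly
  intro x hx y hy
  have hbdd : BddAbove {c : ℝ | ∃ C : ℝ → ℝ → ℝ, IsCopula C ∧
      (∀ t ∈ Set.Icc (0:ℝ) 1, C t (φ t) = Γ t) ∧ c = C x y} := by
    refine ⟨1, ?_⟩
    rintro c ⟨Cc, hc, _, rfl⟩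
    exact (hc.1 x hx y hy).2
  by_cases hyx : y ≤ φ x
  · rw [splice, if_pos hyx]
    apply le_antisymm
    · exact le_csSup hbdd ⟨C1 ψ Γ, hCop1, hsec1, rfl⟩
    · refine csSup_le ⟨_, ⟨C1 ψ Γ, hCop1, hsec1, rfl⟩⟩ ?_
      rintro c ⟨Cc, hc, hsc, rfl⟩
      exact hle1 Cc hc hsc x hx y hy hyx
  · rw [splice, if_neg hyx]
    push_neg at hyx
    apply le_antisymm
    · exact le_csSup hbdd ⟨C2 φ ψ Γ, hCop2, hsec2, rfl⟩
    · refine csSup_le ⟨_, ⟨C2 φ ψ Γ, hCop2, hsec2, rfl⟩⟩ ?_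
      rintro c ⟨Cc, hc, hsc, rfl⟩
      exact hle2 Cc hc hsc x hx y hy hyx.le
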